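/- For large j one has ∫_{|z₁−x₁| ≤ 2^{-j+1}} 2^{-j} |γ̈(x, x₁−z₁)| dz₁ ≲ 2^{-a_j}, uniformly in x. -/

import Mathlib

open MeasureTheory Set Filter
open scoped ENNReal NNReal

noncomputable section


/-- Gronwall-type core: if `ψ ≥ 0` on `[0,c₀]`, `ψ' = f` with `f ≥ -κψ` on `(0,c₀)`,
then `ψ` is quasi-increasing. -/
lemma qm_core (c₀ κ : ℝ) (hc₀ : 0 < c₀) (hκ : 0 ≤ κ) (ψ f : ℝ → ℝ)
    (hψ : ∀ t ∈ Icc (0:ℝ) c₀, HasDerivAt ψ (f t) t)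
    (hψnn : ∀ t ∈ Icc (0:ℝ) c₀, 0 ≤ ψ t)
    (hf : ∀ t ∈ Ioo (0:ℝ) c₀, -(κ * ψ t) ≤ f t) :
    ∀ t t', 0 ≤ t → t ≤ t' → t' ≤ c₀ → ψ t ≤ Real.exp (κ * c₀) * ψ t' := by
  intro t t' ht htt' ht'c
  set G : ℝ → ℝ := fun s => ψ s * Real.exp (κ * s) with hG
  have hGd : ∀ s ∈ Icc (0:ℝ) c₀, HasDerivAt G (f s * Real.exp (κ * s) + ψ s * (Real.exp (κ * s) * κ)) s := by
    intro s hs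
    have h1 : HasDerivAt (fun s : ℝ => Real.exp (κ * s)) (Real.exp (κ * s) * κ) s := by
      have := (Real.hasDerivAt_exp (κ * s)).comp s ((hasDerivAt_id s).const_mul κ)
      simpa [mul_comm, Function.comp_def] using this
    exact (hψ s hs).mul h1
  have hGmono : MonotoneOn G (Icc (0:ℝ) c₀) := by
    apply monotoneOn_of_deriv_nonneg (convex_Icc _ _)
    · intro s hs
      exact ((hGd s hs).continuousAt).continuousWithinAt
    · intro s hs
      rw [interior_Icc] at hs
      exact (hGd s (Ioo_subset_Icc_self hs)).differentiableAt.differentiableWithinAt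
    · intro s hs
      rw [interior_Icc] at hs
      rw [(hGd s (Ioo_subset_Icc_self hs)).deriv]
      have he : 0 < Real.exp (κ * s) := Real.exp_pos _
      have h2 := hf s hs
      nlinarith [hψnn s (Ioo_subset_Icc_self hs)]
  have ht'm : t' ∈ Icc (0:ℝ) c₀ := ⟨le_trans ht htt', ht'c⟩
  have htm : t ∈ Icc (0:ℝ) c₀ := ⟨ht, le_trans htt' ht'c⟩
  have h1 : G t ≤ G t' := hGmono htm ht'm htt'
  have he1 : (1:ℝ) ≤ Real.exp (κ * t) := Real.one_le_exp (by positivity)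
  have he2 : Real.exp (κ * t') ≤ Real.exp (κ * c₀) :=
    Real.exp_le_exp.2 (mul_le_mul_of_nonneg_left ht'c hκ)
  have hψt := hψnn t htm
  have hψt' := hψnn t' ht'm
  calc ψ t ≤ ψ t * Real.exp (κ * t) := le_mul_of_one_le_right hψt he1
    _ ≤ ψ t' * Real.exp (κ * t') := h1
    _ ≤ ψ t' * Real.exp (κ * c₀) := mul_le_mul_of_nonneg_left he2 hψt'
    _ = Real.exp (κ * c₀) * ψ t' := mul_comm _ _

/-- Contradiction core: if `ψ(0) = 0`, `ψ > 0` on `(0,c₀]`, and `ψ' = f ≤ κψ` on `(0,c₀)`,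
then `False`. -/
lemma qm_contra (c₀ κ : ℝ) (hc₀ : 0 < c₀) (hκ : 0 ≤ κ) (ψ f : ℝ → ℝ)
    (hψ : ∀ t ∈ Icc (0:ℝ) c₀, HasDerivAt ψ (f t) t)
    (hψpos : ∀ t ∈ Ioc (0:ℝ) c₀, 0 < ψ t) (hψ0 : ψ 0 = 0)
    (hf : ∀ t ∈ Ioo (0:ℝ) c₀, f t ≤ κ * ψ t) : False := by
  set H : ℝ → ℝ := fun s => ψ s * Real.exp (-(κ * s)) with hH
  have hHd : ∀ s ∈ Icc (0:ℝ) c₀, HasDerivAt H (f s * Real.exp (-(κ * s)) + ψ s * (Real.exp (-(κ * s)) * (-κ))) s := by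
    intro s hs
    have h1 : HasDerivAt (fun s : ℝ => Real.exp (-(κ * s))) (Real.exp (-(κ * s)) * (-κ)) s := by
      have := (Real.hasDerivAt_exp (-(κ * s))).comp s (((hasDerivAt_id s).const_mul κ).neg)
      simpa [mul_comm, Function.comp_def] using this
    exact (hψ s hs).mul h1
  have hHanti : AntitoneOn H (Icc (0:ℝ) c₀) := by
    apply antitoneOn_of_deriv_nonpos (convex_Icc _ _)
    · intro s hs
      exact ((hHd s hs).continuousAt).continuousWithinAt
    · intro s hs
      rw [interior_Icc] at hs
      exact (hHd s (Ioo_subset_Icc_self hs)).differentiableAt.differentiableWithinAt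
    · intro s hs
      rw [interior_Icc] at hs
      rw [(hHd s (Ioo_subset_Icc_self hs)).deriv]
      have he : 0 < Real.exp (-(κ * s)) := Real.exp_pos _
      have h2 := hf s hs
      nlinarith [(hψpos s (Ioo_subset_Ioc_self hs)).le]
  have h0 : H c₀ ≤ H 0 := hHanti ⟨le_refl 0, hc₀.le⟩ ⟨hc₀.le, le_refl c₀⟩ hc₀.le
  have : H 0 = 0 := by simp [hH, hψ0]
  have hpos : 0 < H c₀ := mul_pos (hψpos c₀ ⟨hc₀, le_refl _⟩) (Real.exp_pos _)
  linarith

/-- Quasi-monotonicity of `|φ|` on `[0,c₀]`. -/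
lemma qm_pos (c₀ κ : ℝ) (hc₀ : 0 < c₀) (hκ : 0 ≤ κ) (φ f a E : ℝ → ℝ)
    (hφ : ∀ t ∈ Icc (0:ℝ) c₀, HasDerivAt φ (f t) t)
    (hQM : ∀ t ∈ Ioc (0:ℝ) c₀, f t = a t + E t)
    (hsign : (∀ t ∈ Ioc (0:ℝ) c₀, 0 ≤ a t) ∨ (∀ t ∈ Ioc (0:ℝ) c₀, a t ≤ 0))
    (hE : ∀ t ∈ Ioc (0:ℝ) c₀, |E t| ≤ κ * |φ t|)
    (hφ0 : φ 0 = 0) (hφne : ∀ t ∈ Ioc (0:ℝ) c₀, φ t ≠ 0) :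
    ∀ t t', 0 ≤ t → t ≤ t' → t' ≤ c₀ → |φ t| ≤ Real.exp (κ * c₀) * |φ t'| := by
  have hcontφ : ContinuousOn φ (Icc (0:ℝ) c₀) := fun s hs =>
    (hφ s hs).continuousAt.continuousWithinAt
  have hconst : (∀ s ∈ Ioc (0:ℝ) c₀, 0 < φ s) ∨ (∀ s ∈ Ioc (0:ℝ) c₀, φ s < 0) := by
    by_contra hcon
    push_neg at hcon
    obtain ⟨⟨s₁, hs₁, h1⟩, ⟨s₂, hs₂, h2⟩⟩ := hcon
    have h1' : φ s₁ < 0 := lt_of_le_of_ne h1 (hφne s₁ hs₁)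
    have h2' : 0 < φ s₂ := lt_of_le_of_ne h2 (Ne.symm (hφne s₂ hs₂))
    have hsub : uIcc s₁ s₂ ⊆ Icc (0:ℝ) c₀ :=
      uIcc_subset_Icc ⟨hs₁.1.le, hs₁.2⟩ ⟨hs₂.1.le, hs₂.2⟩
    have h0mem : (0:ℝ) ∈ uIcc (φ s₁) (φ s₂) := by
      rw [mem_uIcc]; left; exact ⟨h1'.le, h2'.le⟩
    obtain ⟨c, hc, hφc⟩ := intermediate_value_uIcc (hcontφ.mono hsub) h0mem
    have hc0 : 0 < c := by
      rw [Set.mem_uIcc] at hc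
      rcases hc with h | h
      · exact lt_of_lt_of_le hs₁.1 h.1
      · exact lt_of_lt_of_le hs₂.1 h.1
    exact hφne c ⟨hc0, (hsub hc).2⟩ hφc
  -- uniform positivity form
  intro t t' ht htt' ht'c
  rcases eq_or_lt_of_le ht with rfl | ht0
  · rw [hφ0, abs_zero]
    positivity
  have ht'mem : t' ∈ Ioc (0:ℝ) c₀ := ⟨lt_of_lt_of_le ht0 htt', ht'c⟩
  have htmem : t ∈ Ioc (0:ℝ) c₀ := ⟨ht0, le_trans htt' ht'c⟩
  rcases hconst with hpos | hneg
  · -- φ > 0 on (0,c₀]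
    have hψnn : ∀ s ∈ Icc (0:ℝ) c₀, 0 ≤ φ s := by
      intro s hs
      rcases eq_or_lt_of_le hs.1 with rfl | hs0
      · exact le_of_eq hφ0.symm
      · exact (hpos s ⟨hs0, hs.2⟩).le
    rcases hsign with ha | ha
    · -- a ≥ 0 : Gronwall
      have key := qm_core c₀ κ hc₀ hκ φ f hφ hψnn (by
        intro s hs
        have hsIoc : s ∈ Ioc (0:ℝ) c₀ := ⟨hs.1, hs.2.le⟩
        have h3 := hE s hsIoc
        rw [abs_of_pos (hpos s hsIoc)] at h3
        obtain ⟨h4, h5⟩ := abs_le.1 h3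
        have hfs := hQM s hsIoc
        have := ha s hsIoc
        show -(κ * φ s) ≤ f s
        rw [hfs]; linarith) t t' ht htt' ht'c
      rwa [abs_of_pos (hpos t htmem), abs_of_pos (hpos t' ht'mem)]
    · -- a ≤ 0 : contradiction
      exact absurd (qm_contra c₀ κ hc₀ hκ φ f hφ hpos hφ0 (by
        intro s hs
        have hsIoc : s ∈ Ioc (0:ℝ) c₀ := ⟨hs.1, hs.2.le⟩
        have h3 := hE s hsIoc
        rw [abs_of_pos (hpos s hsIoc)] at h3
        obtain ⟨h4, h5⟩ := abs_le.1 h3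
        have hfs := hQM s hsIoc
        have := ha s hsIoc
        show f s ≤ κ * φ s
        rw [hfs]; linarith)) (fun h => h)
  · -- φ < 0 on (0,c₀]
    have hψ : ∀ s ∈ Icc (0:ℝ) c₀, HasDerivAt (fun u => -φ u) (-f s) s :=
      fun s hs => (hφ s hs).neg
    have hψnn : ∀ s ∈ Icc (0:ℝ) c₀, 0 ≤ -φ s := by
      intro s hs
      rcases eq_or_lt_of_le hs.1 with rfl | hs0
      · simp [hφ0]
      · linarith [hneg s ⟨hs0, hs.2⟩]
    have habs : ∀ s ∈ Ioc (0:ℝ) c₀, |φ s| = -φ s :=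
      fun s hs => abs_of_neg (hneg s hs)
    rcases hsign with ha | ha
    · -- a ≥ 0 with φ < 0 : contradiction
      exact absurd (qm_contra c₀ κ hc₀ hκ (fun u => -φ u) (fun u => -f u) hψ
        (fun s hs => by simpa using (hneg s hs))
        (by simp [hφ0]) (by
          intro s hs
          have hsIoc : s ∈ Ioc (0:ℝ) c₀ := ⟨hs.1, hs.2.le⟩
          have h3 := hE s hsIoc
          rw [habs s hsIoc] at h3
          obtain ⟨h4, h5⟩ := abs_le.1 h3
          have hfs := hQM s hsIoc
          have := ha s hsIoc
          show -f s ≤ κ * -φ s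
          rw [hfs]; linarith)) (fun h => h)
    · -- a ≤ 0 with φ < 0 : Gronwall for -φ
      have key := qm_core c₀ κ hc₀ hκ (fun u => -φ u) (fun u => -f u) hψ hψnn (by
        intro s hs
        have hsIoc : s ∈ Ioc (0:ℝ) c₀ := ⟨hs.1, hs.2.le⟩
        have h3 := hE s hsIoc
        rw [habs s hsIoc] at h3
        obtain ⟨h4, h5⟩ := abs_le.1 h3
        have hfs := hQM s hsIoc
        have := ha s hsIoc
        show -(κ * -φ s) ≤ -f s
        rw [hfs]; linarith) t t' ht htt' ht'c
      rw [habs t htmem, habs t' ht'mem]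
      simpa using key

lemma qm_neg (c₀ κ : ℝ) (hc₀ : 0 < c₀) (hκ : 0 ≤ κ) (φ f a E : ℝ → ℝ)
    (hφ : ∀ t ∈ Icc (-c₀) (0:ℝ), HasDerivAt φ (f t) t)
    (hQM : ∀ t ∈ Ico (-c₀) (0:ℝ), f t = a t + E t)
    (hsign : (∀ t ∈ Ico (-c₀) (0:ℝ), 0 ≤ a t) ∨ (∀ t ∈ Ico (-c₀) (0:ℝ), a t ≤ 0))
    (hE : ∀ t ∈ Ico (-c₀) (0:ℝ), |E t| ≤ κ * |φ t|)
    (hφ0 : φ 0 = 0) (hφne : ∀ t ∈ Ico (-c₀) (0:ℝ), φ t ≠ 0) :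
    ∀ t t', -c₀ ≤ t' → t' ≤ t → t ≤ 0 → |φ t| ≤ Real.exp (κ * c₀) * |φ t'| := by
  intro t t' ht' htt' ht0
  have hmem : ∀ s ∈ Ioc (0:ℝ) c₀, -s ∈ Ico (-c₀) (0:ℝ) := by
    intro s hs; constructor <;> [linarith [hs.2]; linarith [hs.1]]
  have key := qm_pos c₀ κ hc₀ hκ (fun s => φ (-s)) (fun s => -f (-s))
      (fun s => -a (-s)) (fun s => -E (-s))
      (by
        intro s hs
        have hms : -s ∈ Icc (-c₀) (0:ℝ) := ⟨by linarith [hs.2], by linarith [hs.1]⟩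
        have h1 := (hφ (-s) hms).comp s (hasDerivAt_neg s)
        simpa [mul_comm, Function.comp_def] using h1)
      (by
        intro s hs
        have := hQM (-s) (hmem s hs)
        show -f (-s) = -a (-s) + -E (-s)
        rw [this]; ring)
      (by
        rcases hsign with h | h
        · right; intro s hs; simpa using h (-s) (hmem s hs)
        · left; intro s hs; simpa using h (-s) (hmem s hs))
      (by
        intro s hs
        have := hE (-s) (hmem s hs)
        simpa using this)
      (by simpa using hφ0)
      (by
        intro s hs
        simpa using hφne (-s) (hmem s hs))
      (-t) (-t') (by linarith) (by linarith) (by linarith)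
  simpa using key

/-- Sublemma, part (i).  Under the quasi-monotonicity hypothesis
`γ̈(x,t) = a(x,t) + O(γ̇(x,t))` (with `a(x,·)` of constant sign on `t>0` and on `t<0`)
and the doubling bounds `C₀⁻¹ g(A⁻¹|t|) ≤ |γ̇(x,t)| ≤ C₀ g(A|t|)` for a doubling function
`g`, one has, for large `j` and uniformly in `x`,
`∫_{|z₁-x₁| ≤ 2^{-j+1}} 2^{-j} |γ̈(x, x₁-z₁)| dz₁ ≲ 2^{-a_j}`,
where `2^{-a_j-1} < 2^{-j} g(2^{-5-j} B) ≤ 2^{-a_j}` and `B = 2^20 A`. -/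
theorem sublemma_part_i
    (c₀ A C₀ κ : ℝ) (hc₀ : 0 < c₀) (hA : 1 ≤ A) (hC₀ : 1 ≤ C₀) (hκ : 0 ≤ κ)
    (g : ℝ → ℝ)
    (hgcont : ContinuousOn g (Ici 0)) (hg0 : g 0 = 0)
    (hgpos : ∀ t, 0 < t → 0 < g t)
    (hgdbl : ∀ t₁ t₂, 0 ≤ t₁ → A * t₁ ≤ t₂ → 2 * g t₁ ≤ g t₂)
    (γ γd γdd : ℝ × ℝ → ℝ → ℝ)
    (hγd : ∀ x t, |t| ≤ c₀ → HasDerivAt (γ x) (γd x t) t)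
    (hγdd : ∀ x t, |t| ≤ c₀ → HasDerivAt (γd x) (γdd x t) t)
    (a E : ℝ × ℝ → ℝ → ℝ)
    (hQM : ∀ x t, |t| ≤ c₀ → γdd x t = a x t + E x t)
    (hsignpos : ∀ x, (∀ t ∈ Ioc (0:ℝ) c₀, 0 ≤ a x t) ∨ (∀ t ∈ Ioc (0:ℝ) c₀, a x t ≤ 0))
    (hsignneg : ∀ x, (∀ t ∈ Ico (-c₀) (0:ℝ), 0 ≤ a x t) ∨ (∀ t ∈ Ico (-c₀) (0:ℝ), a x t ≤ 0))
    (hE : ∀ x t, |t| ≤ c₀ → |E x t| ≤ κ * |γd x t|)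
    (hdbl : ∀ x t, |t| ≤ c₀ →
      C₀⁻¹ * g (A⁻¹ * |t|) ≤ |γd x t| ∧ |γd x t| ≤ C₀ * g (A * |t|))
    (B : ℝ) (hB : B = 2 ^ 20 * A)
    (aj : ℤ → ℤ)
    (haj : ∀ j : ℤ, (2:ℝ) ^ (-(aj j) - 1) < (2:ℝ) ^ (-j) * g ((2:ℝ) ^ (-5 - j) * B) ∧
      (2:ℝ) ^ (-j) * g ((2:ℝ) ^ (-5 - j) * B) ≤ (2:ℝ) ^ (-(aj j))) :
    ∃ C : ℝ, 0 < C ∧ ∃ J : ℤ, ∀ j : ℤ, J ≤ j → ∀ x : ℝ × ℝ,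
      (∫ z₁ in Icc (x.1 - 2 ^ (-j + 1)) (x.1 + 2 ^ (-j + 1)),
        (2:ℝ) ^ (-j) * |γdd x (x.1 - z₁)|) ≤ C * (2:ℝ) ^ (-(aj j)) := by
  have hCpos : 0 < 2*(1+2*κ*c₀)*(Real.exp (κ*c₀)*C₀) := by positivity
  obtain ⟨n, hn⟩ := exists_nat_ge (c₀⁻¹)
  refine ⟨2*(1+2*κ*c₀)*(Real.exp (κ*c₀)*C₀), hCpos, (n : ℤ) + 15, ?_⟩
  intro j hj x
  set φ := γd x with hφdef
  set f := γdd x with hfdef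
  set h : ℝ := (2:ℝ) ^ (-j + 1) with hh
  set t' : ℝ := (2:ℝ) ^ (15 - j) with ht'
  set τ : ℝ := (2:ℝ) ^ (-5 - j) * B with hτdef
  have hhpos : 0 < h := by positivity
  have ht'pos : 0 < t' := by positivity
  -- t' ≤ c₀
  have ht'c : t' ≤ c₀ := by
    have h1 : (15 - j : ℤ) ≤ -(n:ℤ) := by omega
    have h2 : t' ≤ (2:ℝ) ^ (-(n:ℤ)) := zpow_le_zpow_right₀ one_le_two h1
    have h3 : (2:ℝ) ^ (-(n:ℤ)) = ((2:ℝ) ^ n)⁻¹ := by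
      rw [zpow_neg, zpow_natCast]
    have h4 : c₀⁻¹ ≤ (2:ℝ) ^ n := by
      calc c₀⁻¹ ≤ (n:ℝ) := hn
        _ ≤ (2:ℝ) ^ n := by exact_mod_cast (Nat.lt_two_pow_self (n := n)).le
    have hp : (0:ℝ) < (2:ℝ) ^ n := by positivity
    have h5 : ((2:ℝ) ^ n)⁻¹ ≤ c₀ := (inv_le_comm₀ hc₀ hp).1 h4
    linarith [h3 ▸ h2]
  have hht' : h ≤ t' := by
    apply zpow_le_zpow_right₀ one_le_two; omega
  have hhc : h ≤ c₀ := le_trans hht' ht'c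
  -- τ = A * t'
  have hτeq : τ = A * t' := by
    rw [hτdef, hB, ht']
    have h20 : ((2:ℝ) ^ (20:ℕ)) = (2:ℝ) ^ ((20:ℕ):ℤ) := (zpow_natCast 2 20).symm
    rw [h20]
    rw [show (((20:ℕ):ℤ)) = (20:ℤ) by norm_num]
    rw [← mul_assoc, ← zpow_add₀ (two_ne_zero (α := ℝ))]
    rw [show (-5 - j + 20 : ℤ) = 15 - j by ring]
    ring
  have hτpos : 0 < τ := by rw [hτeq]; positivity
  have hgτpos : 0 < g τ := hgpos τ hτpos
  -- φ 0 = 0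
  have hφ0 : φ 0 = 0 := by
    have := (hdbl x 0 (by simpa using hc₀.le)).2
    rw [abs_zero, mul_zero, hg0, mul_zero] at this
    exact abs_eq_zero.1 (le_antisymm this (abs_nonneg _))
  -- φ nonvanishing
  have hφne_pos : ∀ s ∈ Ioc (0:ℝ) c₀, φ s ≠ 0 := by
    intro s hs
    have habs : |s| ≤ c₀ := by rw [abs_of_pos hs.1]; exact hs.2
    have h1 := (hdbl x s habs).1
    have h2 : 0 < g (A⁻¹ * |s|) := hgpos _ (by
      have hA0 : (0:ℝ) < A := lt_of_lt_of_le one_pos hA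
      have : 0 < |s| := abs_pos.2 (ne_of_gt hs.1)
      positivity)
    have hC₀pos : (0:ℝ) < C₀ := lt_of_lt_of_le one_pos hC₀
    have : 0 < |φ s| := lt_of_lt_of_le (mul_pos (inv_pos.2 hC₀pos) h2) h1
    exact abs_pos.1 this
  have hφne_neg : ∀ s ∈ Ico (-c₀) (0:ℝ), φ s ≠ 0 := by
    intro s hs
    have habs : |s| ≤ c₀ := by rw [abs_of_neg hs.2]; linarith [hs.1]
    have h1 := (hdbl x s habs).1
    have h2 : 0 < g (A⁻¹ * |s|) := hgpos _ (by
      have hA0 : (0:ℝ) < A := lt_of_lt_of_le one_pos hA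
      have : 0 < |s| := abs_pos.2 (ne_of_lt hs.2)
      positivity)
    have hC₀pos : (0:ℝ) < C₀ := lt_of_lt_of_le one_pos hC₀
    have : 0 < |φ s| := lt_of_lt_of_le (mul_pos (inv_pos.2 hC₀pos) h2) h1
    exact abs_pos.1 this
  -- derivative hypotheses restricted
  have hder_pos : ∀ s ∈ Icc (0:ℝ) c₀, HasDerivAt φ (f s) s := by
    intro s hs
    exact hγdd x s (by rw [abs_of_nonneg hs.1]; exact hs.2)
  have hder_neg : ∀ s ∈ Icc (-c₀) (0:ℝ), HasDerivAt φ (f s) s := by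
    intro s hs
    exact hγdd x s (by rw [abs_of_nonpos hs.2]; linarith [hs.1])
  have habs_le : ∀ s : ℝ, -c₀ ≤ s → s ≤ c₀ → |s| ≤ c₀ := fun s h1 h2 => abs_le.2 ⟨h1, h2⟩
  -- sup bound for |φ| on [-h, h]
  set M : ℝ := Real.exp (κ*c₀) * (C₀ * g τ) with hM
  have hMnn : 0 ≤ M := by positivity
  have hφt' : |φ t'| ≤ C₀ * g τ := by
    have := (hdbl x t' (by rw [abs_of_pos ht'pos]; exact ht'c)).2
    rwa [abs_of_pos ht'pos, ← hτeq] at this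
  have hφmt' : |φ (-t')| ≤ C₀ * g τ := by
    have := (hdbl x (-t') (by rw [abs_neg, abs_of_pos ht'pos]; exact ht'c)).2
    rwa [abs_neg, abs_of_pos ht'pos, ← hτeq] at this
  have hsup : ∀ s : ℝ, -h ≤ s → s ≤ h → |φ s| ≤ M := by
    intro s hs1 hs2
    rcases le_or_gt 0 s with hs0 | hs0
    · have key := qm_pos c₀ κ hc₀ hκ φ f (a x) (E x) hder_pos
        (fun u hu => hQM x u (habs_le u (by linarith [hu.1]) hu.2))
        (hsignpos x)
        (fun u hu => hE x u (habs_le u (by linarith [hu.1]) hu.2))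
        hφ0 hφne_pos s t' hs0 (le_trans hs2 hht') ht'c
      calc |φ s| ≤ Real.exp (κ*c₀) * |φ t'| := key
        _ ≤ M := by rw [hM]; exact mul_le_mul_of_nonneg_left hφt' (Real.exp_pos _).le
    · have key := qm_neg c₀ κ hc₀ hκ φ f (a x) (E x) hder_neg
        (fun u hu => hQM x u (habs_le u hu.1 (by linarith [hu.2])))
        (hsignneg x)
        (fun u hu => hE x u (habs_le u hu.1 (by linarith [hu.2])))
        hφ0 hφne_neg s (-t') (by linarith) (by linarith) hs0.le
      calc |φ s| ≤ Real.exp (κ*c₀) * |φ (-t')| := key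
        _ ≤ M := by rw [hM]; exact mul_le_mul_of_nonneg_left hφmt' (Real.exp_pos _).le
  -- continuity of |φ| on [-c₀,c₀]
  have hφcont : ContinuousOn φ (Icc (-c₀) c₀) := fun s hs =>
    (hγdd x s (habs_le s hs.1 hs.2)).continuousAt.continuousWithinAt
  have hφabs_int : ∀ s1 s2 : ℝ, -c₀ ≤ s1 → s2 ≤ c₀ →
      IntegrableOn (fun t => |φ t|) (Icc s1 s2) volume := by
    intro s1 s2 h1 h2
    apply ContinuousOn.integrableOn_Icc
    apply (hφcont.mono (Icc_subset_Icc h1 h2)).abs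
  -- rewrite goal as interval integral
  have hx1 : x.1 - h ≤ x.1 + h := by linarith
  have hIccconv : (∫ z₁ in Icc (x.1 - h) (x.1 + h), (2:ℝ)^(-j) * |f (x.1 - z₁)|)
      = (2:ℝ)^(-j) * ∫ t in (-h)..h, |f t| := by
    rw [MeasureTheory.integral_Icc_eq_integral_Ioc, ← intervalIntegral.integral_of_le hx1]
    rw [intervalIntegral.integral_comp_sub_left (fun t => (2:ℝ)^(-j) * |f t|) x.1]
    rw [show x.1 - (x.1 + h) = -h by ring, show x.1 - (x.1 - h) = h by ring]
    rw [intervalIntegral.integral_const_mul]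
  rw [hIccconv]
  have h2jnn : (0:ℝ) ≤ (2:ℝ)^(-j) := by positivity
  by_cases hInt : IntervalIntegrable (fun t => |f t|) volume (-h) h
  · -- the integrable case
    -- f is interval integrable
    have hfeq : ∀ t ∈ Icc (-h) h, f t = deriv φ t := by
      intro t ht
      exact (hγdd x t (le_trans (abs_le.2 ⟨ht.1, ht.2⟩) hhc)).deriv.symm
    have hfaem : AEStronglyMeasurable f (volume.restrict (Ioc (-h) h)) := by
      apply ((measurable_deriv φ).aestronglyMeasurable.restrict).congr
      rw [Filter.eventuallyEq_iff_exists_mem]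
      exact ⟨Ioc (-h) h, by
        rw [MeasureTheory.mem_ae_iff, Measure.restrict_apply (measurableSet_Ioc.compl)]
        simp, fun t ht => (hfeq t (Ioc_subset_Icc_self ht)).symm⟩
    have hfint : IntervalIntegrable f volume (-h) h := by
      rw [intervalIntegrable_iff_integrableOn_Ioc_of_le (by linarith)]
      have habsint : IntegrableOn (fun t => |f t|) (Ioc (-h) h) volume := by
        rw [← intervalIntegrable_iff_integrableOn_Ioc_of_le (by linarith)]
        exact hInt
      exact habsint.mono' hfaem (by
        filter_upwards with t
        rw [Real.norm_eq_abs])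
    have huIcc : Set.uIcc (-h) h = Icc (-h) h := Set.uIcc_of_le (by linarith)
    have hsub1 : Set.uIcc (-h) (0:ℝ) ⊆ Set.uIcc (-h) h := by
      rw [huIcc, Set.uIcc_of_le (by linarith : (-h:ℝ) ≤ 0)]
      exact Icc_subset_Icc le_rfl hhpos.le
    have hsub2 : Set.uIcc (0:ℝ) h ⊆ Set.uIcc (-h) h := by
      rw [huIcc, Set.uIcc_of_le hhpos.le]
      exact Icc_subset_Icc (by linarith) le_rfl
    have hfint1 : IntervalIntegrable f volume (-h) 0 := hfint.mono_set hsub1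
    have hfint2 : IntervalIntegrable f volume 0 h := hfint.mono_set hsub2
    have hInt1 : IntervalIntegrable (fun t => |f t|) volume (-h) 0 := hInt.mono_set hsub1
    have hInt2 : IntervalIntegrable (fun t => |f t|) volume 0 h := hInt.mono_set hsub2
    -- FTC
    have hftc2 : ∫ t in (0:ℝ)..h, f t = φ h - φ 0 := by
      apply intervalIntegral.integral_eq_sub_of_hasDerivAt _ hfint2
      intro t ht
      rw [Set.uIcc_of_le hhpos.le] at ht
      exact hγdd x t (le_trans (abs_le.2 ⟨by linarith [ht.1], ht.2⟩) hhc)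
    have hftc1 : ∫ t in (-h)..(0:ℝ), f t = φ 0 - φ (-h) := by
      apply intervalIntegral.integral_eq_sub_of_hasDerivAt _ hfint1
      intro t ht
      rw [Set.uIcc_of_le (by linarith : (-h:ℝ) ≤ 0)] at ht
      exact hγdd x t (le_trans (abs_le.2 ⟨ht.1, by linarith [ht.2]⟩) hhc)
    -- bound on the positive piece
    have volIoc : (volume (Ioc (0:ℝ) h)).toReal = h := by
      rw [Real.volume_Ioc, ENNReal.toReal_ofReal (by linarith)]
      ring
    have volIoo : (volume (Ioo (-h) (0:ℝ))).toReal = h := by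
      rw [Real.volume_Ioo, ENNReal.toReal_ofReal (by linarith)]
      ring
    have hIoc_int_f : IntegrableOn f (Ioc (0:ℝ) h) volume := by
      rw [← intervalIntegrable_iff_integrableOn_Ioc_of_le hhpos.le]
      exact hfint2
    have hIoc_int_absf : IntegrableOn (fun t => |f t|) (Ioc (0:ℝ) h) volume := by
      rw [← intervalIntegrable_iff_integrableOn_Ioc_of_le hhpos.le]
      exact hInt2
    have hIoc_int_absφ : IntegrableOn (fun t => |φ t|) (Ioc (0:ℝ) h) volume :=
      (hφabs_int 0 h (by linarith) hhc).mono_set Ioc_subset_Icc_self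
    have hpos_piece : (∫ t in (0:ℝ)..h, |f t|) ≤ (1 + 2*κ*c₀) * M := by
      obtain ⟨σ, hσabs, hσa⟩ : ∃ σ : ℝ, |σ| = 1 ∧ ∀ s ∈ Ioc (0:ℝ) c₀, |a x s| = σ * a x s := by
        rcases hsignpos x with hsa | hsa
        · exact ⟨1, abs_one, fun s hs => by rw [abs_of_nonneg (hsa s hs), one_mul]⟩
        · exact ⟨-1, by norm_num, fun s hs => by rw [abs_of_nonpos (hsa s hs)]; ring⟩
      have hptwise : ∀ t ∈ Ioc (0:ℝ) h, |f t| ≤ σ * f t + 2*(κ*|φ t|) := by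
        intro t ht
        have htc : t ∈ Ioc (0:ℝ) c₀ := ⟨ht.1, le_trans ht.2 hhc⟩
        have habs : |t| ≤ c₀ := by rw [abs_of_pos ht.1]; exact htc.2
        have hfs : f t = a x t + E x t := hQM x t habs
        have hEt : |E x t| ≤ κ * |φ t| := hE x t habs
        have haσ := hσa t htc
        calc |f t| = |a x t + E x t| := by rw [hfs]
          _ ≤ |a x t| + |E x t| := abs_add_le _ _
          _ = σ * a x t + |E x t| := by rw [haσ]
          _ = σ * f t - σ * E x t + |E x t| := by rw [hfs]; ring
          _ ≤ σ * f t + (|σ * E x t| + |E x t|) := by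
              have := neg_abs_le (σ * E x t)
              linarith
          _ = σ * f t + 2*|E x t| := by rw [abs_mul, hσabs, one_mul]; ring
          _ ≤ σ * f t + 2*(κ*|φ t|) := by linarith
      have hrhsint : IntegrableOn (fun t => σ * f t + 2*(κ*|φ t|)) (Ioc (0:ℝ) h) volume :=
        (hIoc_int_f.const_mul σ).add ((hIoc_int_absφ.const_mul κ).const_mul 2)
      have step1 : (∫ t in (0:ℝ)..h, |f t|) ≤ ∫ t in Ioc (0:ℝ) h, (σ * f t + 2*(κ*|φ t|)) := by
        rw [intervalIntegral.integral_of_le hhpos.le]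
        exact setIntegral_mono_on hIoc_int_absf hrhsint measurableSet_Ioc hptwise
      have step2 : (∫ t in Ioc (0:ℝ) h, (σ * f t + 2*(κ*|φ t|)))
          = σ * (∫ t in Ioc (0:ℝ) h, f t) + 2*(κ* ∫ t in Ioc (0:ℝ) h, |φ t|) := by
        rw [MeasureTheory.integral_add (hIoc_int_f.const_mul σ)
          ((hIoc_int_absφ.const_mul κ).const_mul 2)]
        rw [MeasureTheory.integral_const_mul, MeasureTheory.integral_const_mul,
          MeasureTheory.integral_const_mul]
      have step3 : σ * (∫ t in Ioc (0:ℝ) h, f t) ≤ M := by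
        have : (∫ t in Ioc (0:ℝ) h, f t) = φ h - φ 0 := by
          rw [← intervalIntegral.integral_of_le hhpos.le]; exact hftc2
        rw [this, hφ0, sub_zero]
        calc σ * φ h ≤ |σ * φ h| := le_abs_self _
          _ = |φ h| := by rw [abs_mul, hσabs, one_mul]
          _ ≤ M := hsup h (by linarith) le_rfl
      have step4 : (∫ t in Ioc (0:ℝ) h, |φ t|) ≤ c₀ * M := by
        have hb : (∫ t in Ioc (0:ℝ) h, |φ t|) ≤ ∫ _t in Ioc (0:ℝ) h, M := by
          apply setIntegral_mono_on hIoc_int_absφ (integrableOn_const (by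
            rw [Real.volume_Ioc]; exact ENNReal.ofReal_ne_top)) measurableSet_Ioc
          intro t ht
          exact hsup t (by linarith [ht.1]) ht.2
        rw [MeasureTheory.setIntegral_const, measureReal_def, volIoc, smul_eq_mul] at hb
        calc (∫ t in Ioc (0:ℝ) h, |φ t|) ≤ h * M := hb
          _ ≤ c₀ * M := mul_le_mul_of_nonneg_right hhc hMnn
      calc (∫ t in (0:ℝ)..h, |f t|)
          ≤ σ * (∫ t in Ioc (0:ℝ) h, f t) + 2*(κ* ∫ t in Ioc (0:ℝ) h, |φ t|) := by
            rw [← step2]; exact step1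
        _ ≤ M + 2*(κ*(c₀*M)) := by
            have h4 : κ * (∫ t in Ioc (0:ℝ) h, |φ t|) ≤ κ*(c₀*M) :=
              mul_le_mul_of_nonneg_left step4 hκ
            linarith
        _ = (1 + 2*κ*c₀) * M := by ring
    -- bound on the negative piece
    have hIoo_int_f : IntegrableOn f (Ioo (-h) (0:ℝ)) volume := by
      have : IntegrableOn f (Ioc (-h) (0:ℝ)) volume := by
        rw [← intervalIntegrable_iff_integrableOn_Ioc_of_le (by linarith : (-h:ℝ) ≤ 0)]
        exact hfint1
      exact this.mono_set Ioo_subset_Ioc_self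
    have hIoo_int_absf : IntegrableOn (fun t => |f t|) (Ioo (-h) (0:ℝ)) volume := by
      have : IntegrableOn (fun t => |f t|) (Ioc (-h) (0:ℝ)) volume := by
        rw [← intervalIntegrable_iff_integrableOn_Ioc_of_le (by linarith : (-h:ℝ) ≤ 0)]
        exact hInt1
      exact this.mono_set Ioo_subset_Ioc_self
    have hIoo_int_absφ : IntegrableOn (fun t => |φ t|) (Ioo (-h) (0:ℝ)) volume :=
      (hφabs_int (-h) 0 (by linarith) hc₀.le).mono_set
        (subset_trans Ioo_subset_Ioc_self Ioc_subset_Icc_self)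
    have hneg_piece : (∫ t in (-h)..(0:ℝ), |f t|) ≤ (1 + 2*κ*c₀) * M := by
      obtain ⟨σ, hσabs, hσa⟩ : ∃ σ : ℝ, |σ| = 1 ∧ ∀ s ∈ Ico (-c₀) (0:ℝ), |a x s| = σ * a x s := by
        rcases hsignneg x with hsa | hsa
        · exact ⟨1, abs_one, fun s hs => by rw [abs_of_nonneg (hsa s hs), one_mul]⟩
        · exact ⟨-1, by norm_num, fun s hs => by rw [abs_of_nonpos (hsa s hs)]; ring⟩
      have hptwise : ∀ t ∈ Ioo (-h) (0:ℝ), |f t| ≤ σ * f t + 2*(κ*|φ t|) := by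
        intro t ht
        have htc : t ∈ Ico (-c₀) (0:ℝ) := ⟨by linarith [ht.1], ht.2⟩
        have habs : |t| ≤ c₀ := habs_le t htc.1 (by linarith [ht.2])
        have hfs : f t = a x t + E x t := hQM x t habs
        have hEt : |E x t| ≤ κ * |φ t| := hE x t habs
        have haσ := hσa t htc
        calc |f t| = |a x t + E x t| := by rw [hfs]
          _ ≤ |a x t| + |E x t| := abs_add_le _ _
          _ = σ * a x t + |E x t| := by rw [haσ]
          _ = σ * f t - σ * E x t + |E x t| := by rw [hfs]; ring
          _ ≤ σ * f t + (|σ * E x t| + |E x t|) := by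
              have := neg_abs_le (σ * E x t)
              linarith
          _ = σ * f t + 2*|E x t| := by rw [abs_mul, hσabs, one_mul]; ring
          _ ≤ σ * f t + 2*(κ*|φ t|) := by linarith
      have hrhsint : IntegrableOn (fun t => σ * f t + 2*(κ*|φ t|)) (Ioo (-h) (0:ℝ)) volume :=
        (hIoo_int_f.const_mul σ).add ((hIoo_int_absφ.const_mul κ).const_mul 2)
      have step1 : (∫ t in (-h)..(0:ℝ), |f t|) ≤ ∫ t in Ioo (-h) (0:ℝ), (σ * f t + 2*(κ*|φ t|)) := by
        rw [intervalIntegral.integral_of_le (by linarith : (-h:ℝ) ≤ 0),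
          MeasureTheory.integral_Ioc_eq_integral_Ioo]
        exact setIntegral_mono_on hIoo_int_absf hrhsint measurableSet_Ioo hptwise
      have step2 : (∫ t in Ioo (-h) (0:ℝ), (σ * f t + 2*(κ*|φ t|)))
          = σ * (∫ t in Ioo (-h) (0:ℝ), f t) + 2*(κ* ∫ t in Ioo (-h) (0:ℝ), |φ t|) := by
        rw [MeasureTheory.integral_add (hIoo_int_f.const_mul σ)
          ((hIoo_int_absφ.const_mul κ).const_mul 2)]
        rw [MeasureTheory.integral_const_mul, MeasureTheory.integral_const_mul,
          MeasureTheory.integral_const_mul]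
      have step3 : σ * (∫ t in Ioo (-h) (0:ℝ), f t) ≤ M := by
        have : (∫ t in Ioo (-h) (0:ℝ), f t) = φ 0 - φ (-h) := by
          rw [← MeasureTheory.integral_Ioc_eq_integral_Ioo,
            ← intervalIntegral.integral_of_le (by linarith : (-h:ℝ) ≤ 0)]
          exact hftc1
        rw [this, hφ0, zero_sub]
        calc σ * -φ (-h) ≤ |σ * -φ (-h)| := le_abs_self _
          _ = |φ (-h)| := by rw [abs_mul, hσabs, one_mul, abs_neg]
          _ ≤ M := hsup (-h) le_rfl (by linarith)
      have step4 : (∫ t in Ioo (-h) (0:ℝ), |φ t|) ≤ c₀ * M := by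
        have hb : (∫ t in Ioo (-h) (0:ℝ), |φ t|) ≤ ∫ _t in Ioo (-h) (0:ℝ), M := by
          apply setIntegral_mono_on hIoo_int_absφ (integrableOn_const (by
            rw [Real.volume_Ioo]; exact ENNReal.ofReal_ne_top)) measurableSet_Ioo
          intro t ht
          exact hsup t (by linarith [ht.1]) (by linarith [ht.2])
        rw [MeasureTheory.setIntegral_const, measureReal_def, volIoo, smul_eq_mul] at hb
        calc (∫ t in Ioo (-h) (0:ℝ), |φ t|) ≤ h * M := hb
          _ ≤ c₀ * M := mul_le_mul_of_nonneg_right hhc hMnn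
      calc (∫ t in (-h)..(0:ℝ), |f t|)
          ≤ σ * (∫ t in Ioo (-h) (0:ℝ), f t) + 2*(κ* ∫ t in Ioo (-h) (0:ℝ), |φ t|) := by
            rw [← step2]; exact step1
        _ ≤ M + 2*(κ*(c₀*M)) := by
            have h4 : κ * (∫ t in Ioo (-h) (0:ℝ), |φ t|) ≤ κ*(c₀*M) :=
              mul_le_mul_of_nonneg_left step4 hκ
            linarith
        _ = (1 + 2*κ*c₀) * M := by ring
    -- combine
    have hsplit : (∫ t in (-h)..h, |f t|)
        = (∫ t in (-h)..(0:ℝ), |f t|) + ∫ t in (0:ℝ)..h, |f t| :=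
      (intervalIntegral.integral_add_adjacent_intervals hInt1 hInt2).symm
    have htotal : (∫ t in (-h)..h, |f t|) ≤ 2*(1+2*κ*c₀)*(Real.exp (κ*c₀)*C₀) * g τ := by
      rw [hsplit]
      calc (∫ t in (-h)..(0:ℝ), |f t|) + ∫ t in (0:ℝ)..h, |f t|
          ≤ (1 + 2*κ*c₀) * M + (1 + 2*κ*c₀) * M := add_le_add hneg_piece hpos_piece
        _ = 2*(1+2*κ*c₀)*(Real.exp (κ*c₀)*C₀) * g τ := by rw [hM]; ring
    calc (2:ℝ)^(-j) * ∫ t in (-h)..h, |f t|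
        ≤ (2:ℝ)^(-j) * (2*(1+2*κ*c₀)*(Real.exp (κ*c₀)*C₀) * g τ) :=
          mul_le_mul_of_nonneg_left htotal h2jnn
      _ = 2*(1+2*κ*c₀)*(Real.exp (κ*c₀)*C₀) * ((2:ℝ)^(-j) * g τ) := by ring
      _ ≤ 2*(1+2*κ*c₀)*(Real.exp (κ*c₀)*C₀) * (2:ℝ)^(-(aj j)) :=
          mul_le_mul_of_nonneg_left ((haj j).2) hCpos.le
  · -- non-integrable case: the integral is 0
    rw [intervalIntegral.integral_undef hInt, mul_zero]
    positivity
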